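/- arXiv:2101.10546 — 3 statements merged into one kernel-verified Lean document; each statement's English description precedes it below -/
import Mathlib

section
/- Let f: ℝⁿ → ℝ be differentiable, μ-strongly convex with L-Lipschitz gradient, 0 < μ ≤ L, and let x* be the point with ∇f(x*) = 0. Set c₁ = 2/(μ + L) and c₂ = 2μL/(μ + L). Then for any step size α with 0 < α ≤ c₁ and any x ∈ ℝⁿ, the steepest-descent update satisfies ‖x − α∇f(x) − x*‖² ≤ (1 − αc₂)‖x − x*‖². -/
open Set InnerProductSpace intervalIntegral

section SteepestDescentAux

variable {E : Type*} [NormedAddCommGroup E] [InnerProductSpace ℝ E] [CompleteSpace E]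

local notation "⟪" x ", " y "⟫" => @inner ℝ _ _ x y

private lemma aux_line_deriv {f : E → ℝ} {g : E} (x v : E) (t : ℝ)
    (hg : HasGradientAt f g (x + t • v)) :
    HasDerivAt (fun s : ℝ => f (x + s • v)) ⟪g, v⟫ t := by
  have hline : HasDerivAt (fun s : ℝ => x + s • v) v t := by
    simpa using ((hasDerivAt_id t).smul_const v).const_add x
  have := hg.hasFDerivAt.comp_hasDerivAt t hline
  simpa [InnerProductSpace.toDual_apply_apply, Function.comp_def] using this

private lemma aux_first_order {f : E → ℝ} (hconv : ConvexOn ℝ Set.univ f) {x y g : E}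
    (hg : HasGradientAt f g x) : ⟪g, y - x⟫ ≤ f y - f x := by
  set v := y - x with hv
  have hd : HasDerivAt (fun s : ℝ => f (x + s • v)) ⟪g, v⟫ 0 :=
    aux_line_deriv x v 0 (by simpa using hg)
  have hconvh : ConvexOn ℝ Set.univ (fun s : ℝ => f (x + s • v)) := by
    have := hconv.comp_affineMap (AffineMap.lineMap x y)
    simp only [Set.preimage_univ] at this
    have e : (fun s : ℝ => f (x + s • v)) = f ∘ AffineMap.lineMap x y := by
      funext s
      simp [AffineMap.lineMap_apply, hv, add_comm]
    rw [e]; exact this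
  have h1 := hconvh.deriv_le_slope (Set.mem_univ (0:ℝ)) (Set.mem_univ 1) one_pos
    hd.differentiableAt
  rw [hd.deriv] at h1
  have hs : slope (fun s : ℝ => f (x + s • v)) 0 1 = f y - f x := by
    simp [slope, hv]
  linarith [hs ▸ h1]

private lemma aux_grad_sub {f g : E → ℝ} {a b z : E} (hf : HasGradientAt f a z)
    (hg : HasGradientAt g b z) : HasGradientAt (fun w => f w - g w) (a - b) z := by
  have h := hf.hasFDerivAt.sub hg.hasFDerivAt
  rw [← map_sub] at h
  have h' := h.hasGradientAt
  simp only [LinearIsometryEquiv.symm_apply_apply] at h'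
  exact h'

private lemma aux_grad_inner (v z : E) : HasGradientAt (fun w : E => ⟪v, w⟫) v z := by
  have h : HasFDerivAt (fun w : E => ⟪v, w⟫) (toDual ℝ E v) z := by
    have h0 : (fun w : E => ⟪v, w⟫) = ⇑(toDual ℝ E v) := by
      funext w; simp [InnerProductSpace.toDual_apply_apply]
    rw [h0]; exact (toDual ℝ E v).hasFDerivAt (x := z)
  simpa using h.hasGradientAt

private lemma aux_grad_norm_sq (c : ℝ) (z : E) :
    HasGradientAt (fun w : E => c / 2 * ‖w‖ ^ 2) (c • z) z := by
  have h : HasFDerivAt (fun w : E => ⟪w, w⟫)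
      ((fderivInnerCLM ℝ (z, z)).comp ((ContinuousLinearMap.id ℝ E).prod
        (ContinuousLinearMap.id ℝ E))) z := (hasFDerivAt_id z).inner ℝ (hasFDerivAt_id z)
  have h2 := h.const_mul (c / 2)
  have h3 : HasFDerivAt (fun w : E => c / 2 * ‖w‖ ^ 2) (toDual ℝ E (c • z)) z := by
    have heq : (fun w : E => c / 2 * ⟪w, w⟫) = fun w : E => c / 2 * ‖w‖ ^ 2 := by
      funext w; rw [real_inner_self_eq_norm_sq]
    rw [heq] at h2
    refine h2.congr_fderiv ?_
    ext u
    simp [InnerProductSpace.toDual_apply_apply, real_inner_smul_left, fderivInnerCLM_apply,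
      real_inner_comm]
    ring
  simpa using h3.hasGradientAt

private lemma aux_descent {f : E → ℝ} {G : E → E} (hG : ∀ z, HasGradientAt f (G z) z)
    {L : ℝ} (hL : 0 ≤ L) (hlip : ∀ a b : E, ‖G a - G b‖ ≤ L * ‖a - b‖) (x y : E) :
    f y ≤ f x + ⟪G x, y - x⟫ + L / 2 * ‖y - x‖ ^ 2 := by
  set v := y - x with hv
  have hGcont : Continuous G := by
    have : LipschitzWith L.toNNReal G := by
      apply LipschitzWith.of_dist_le_mul
      intro a b
      rw [dist_eq_norm, dist_eq_norm, Real.coe_toNNReal L hL]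
      exact hlip a b
    exact this.continuous
  set h' : ℝ → ℝ := fun t => ⟪G (x + t • v), v⟫ with hh'
  have hderiv : ∀ t : ℝ, HasDerivAt (fun s : ℝ => f (x + s • v)) (h' t) t :=
    fun t => aux_line_deriv x v t (hG _)
  have hcont : Continuous h' := by
    apply Continuous.inner
    · exact hGcont.comp (by continuity)
    · exact continuous_const
  have hint : f (x + (1:ℝ) • v) - f (x + (0:ℝ) • v) = ∫ t in (0:ℝ)..1, h' t := by
    exact (integral_eq_sub_of_hasDerivAt (fun t _ => hderiv t)
      (hcont.intervalIntegrable 0 1)).symm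
  have hbound : ∀ t ∈ Set.Icc (0:ℝ) 1, h' t ≤ ⟪G x, v⟫ + L * ‖v‖ ^ 2 * t := by
    intro t ht
    have h1 : h' t - ⟪G x, v⟫ = ⟪G (x + t • v) - G x, v⟫ := by
      rw [inner_sub_left]
    have h2 : ⟪G (x + t • v) - G x, v⟫ ≤ ‖G (x + t • v) - G x‖ * ‖v‖ :=
      real_inner_le_norm _ _
    have h3 : ‖G (x + t • v) - G x‖ ≤ L * (t * ‖v‖) := by
      have := hlip (x + t • v) x
      simpa [norm_smul, abs_of_nonneg ht.1] using this
    nlinarith [norm_nonneg v, norm_nonneg (G (x + t • v) - G x), ht.1]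
  have hrhsint : (∫ t in (0:ℝ)..1, (⟪G x, v⟫ + L * ‖v‖ ^ 2 * t)) =
      ⟪G x, v⟫ + L / 2 * ‖v‖ ^ 2 := by
    rw [integral_add (intervalIntegrable_const)
      ((intervalIntegral.intervalIntegrable_id).const_mul _)]
    rw [integral_const_mul, integral_id, integral_const]
    simp
    ring
  have hmono : (∫ t in (0:ℝ)..1, h' t) ≤ ∫ t in (0:ℝ)..1, (⟪G x, v⟫ + L * ‖v‖ ^ 2 * t) := by
    apply integral_mono_on zero_le_one (hcont.intervalIntegrable 0 1)
      ((_root_.intervalIntegrable_const).add ((intervalIntegral.intervalIntegrable_id).const_mul _))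
    exact hbound
  have e1 : x + (1:ℝ) • v = y := by rw [one_smul, hv]; abel
  have e0 : x + (0:ℝ) • v = x := by simp
  rw [e1, e0] at hint
  linarith [hrhsint ▸ hmono, hint]

private lemma aux_conv_sub_linear {g : E → ℝ} (hconv : ConvexOn ℝ Set.univ g) (v : E) :
    ConvexOn ℝ Set.univ (fun z => g z - ⟪v, z⟫) := by
  refine ⟨convex_univ, fun a _ b _ p q hp hq hpq => ?_⟩
  have h := hconv.2 (Set.mem_univ a) (Set.mem_univ b) hp hq hpq
  simp only [smul_eq_mul] at *
  rw [inner_add_right, real_inner_smul_right, real_inner_smul_right]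
  linarith

private lemma aux_coco_half {g : E → ℝ} {G : E → E} (hG : ∀ z, HasGradientAt g (G z) z)
    (hconv : ConvexOn ℝ Set.univ g) {M : ℝ} (hM : 0 < M)
    (hdesc : ∀ a b : E, g b ≤ g a + ⟪G a, b - a⟫ + M / 2 * ‖b - a‖ ^ 2) (x y : E) :
    g y + ⟪G y, x - y⟫ + 1 / (2 * M) * ‖G x - G y‖ ^ 2 ≤ g x := by
  set φ : E → ℝ := fun z => g z - ⟪G y, z⟫ with hφ
  have hφG : ∀ z, HasGradientAt φ (G z - G y) z :=
    fun z => aux_grad_sub (hG z) (aux_grad_inner (G y) z)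
  have hφconv : ConvexOn ℝ Set.univ φ := aux_conv_sub_linear hconv (G y)
  have hmin : ∀ z, φ y ≤ φ z := by
    intro z
    have h := aux_first_order hφconv (y := z) (by simpa using hφG y)
    simpa using h
  set u := G x - G y with hu
  set z := x - M⁻¹ • u with hz
  have hzx : z - x = -(M⁻¹ • u) := by rw [hz]; abel
  have h1 : φ z ≤ φ x + ⟪u, z - x⟫ + M / 2 * ‖z - x‖ ^ 2 := by
    have hd := hdesc x z
    have e1 : ⟪G x, z - x⟫ = ⟪u, z - x⟫ + ⟪G y, z - x⟫ := by
      rw [hu, inner_sub_left]; ring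
    have e2 : ⟪G y, z⟫ = ⟪G y, x⟫ + ⟪G y, z - x⟫ := by
      rw [← inner_add_right]; norm_num
    simp only [hφ]
    linarith
  have e3 : ⟪u, z - x⟫ = -(M⁻¹ * ‖u‖ ^ 2) := by
    rw [hzx, inner_neg_right, real_inner_smul_right, real_inner_self_eq_norm_sq]
  have e4 : ‖z - x‖ ^ 2 = M⁻¹ ^ 2 * ‖u‖ ^ 2 := by
    rw [hzx, norm_neg, norm_smul]
    rw [Real.norm_eq_abs, abs_inv, abs_of_pos hM]
    ring
  have h2 := hmin z
  have e5 : ⟪G y, x - y⟫ = ⟪G y, x⟫ - ⟪G y, y⟫ := inner_sub_right _ _ _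
  have hM' : M ≠ 0 := ne_of_gt hM
  simp only [hφ] at h1 h2
  rw [e3, e4] at h1
  have key : g y - ⟪G y, y⟫ + 1 / (2 * M) * ‖u‖ ^ 2 ≤ g x - ⟪G y, x⟫ := by
    have : M / 2 * (M⁻¹ ^ 2 * ‖u‖ ^ 2) - M⁻¹ * ‖u‖ ^ 2 = -(1 / (2 * M) * ‖u‖ ^ 2) := by
      field_simp; ring
    linarith
  linarith

private lemma aux_coco {g : E → ℝ} {G : E → E} (hG : ∀ z, HasGradientAt g (G z) z)
    (hconv : ConvexOn ℝ Set.univ g) {M : ℝ} (hM : 0 < M)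
    (hdesc : ∀ a b : E, g b ≤ g a + ⟪G a, b - a⟫ + M / 2 * ‖b - a‖ ^ 2) (x y : E) :
    1 / M * ‖G x - G y‖ ^ 2 ≤ ⟪G x - G y, x - y⟫ := by
  have h1 := aux_coco_half hG hconv hM hdesc x y
  have h2 := aux_coco_half hG hconv hM hdesc y x
  have e1 : ‖G y - G x‖ = ‖G x - G y‖ := norm_sub_rev _ _
  rw [e1] at h2
  have e2 : ⟪G x - G y, x - y⟫ = ⟪G x, x - y⟫ - ⟪G y, x - y⟫ := inner_sub_left _ _ _
  have e3 : ⟪G x, y - x⟫ = -⟪G x, x - y⟫ := by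
    rw [show y - x = -(x - y) by abel, inner_neg_right]
  have e4 : 1 / (2 * M) * ‖G x - G y‖ ^ 2 + 1 / (2 * M) * ‖G x - G y‖ ^ 2
      = 1 / M * ‖G x - G y‖ ^ 2 := by
    field_simp; ring
  linarith

private lemma aux_key {f : E → ℝ} {G : E → E} (hG : ∀ z, HasGradientAt f (G z) z)
    {μ L : ℝ} (hμ : 0 < μ) (hμL : μ ≤ L)
    (hsc : ConvexOn ℝ Set.univ (fun z => f z - μ / 2 * ‖z‖ ^ 2))
    (hlip : ∀ a b : E, ‖G a - G b‖ ≤ L * ‖a - b‖) (x y : E) :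
    μ * L * ‖x - y‖ ^ 2 + ‖G x - G y‖ ^ 2 ≤ (μ + L) * ⟪G x - G y, x - y⟫ := by
  set φ : E → ℝ := fun z => f z - μ / 2 * ‖z‖ ^ 2 with hφ
  have hGφ : ∀ z, HasGradientAt φ (G z - μ • z) z :=
    fun z => aux_grad_sub (hG z) (aux_grad_norm_sq μ z)
  -- strong monotonicity
  have mono : ∀ a b : E, μ * ‖a - b‖ ^ 2 ≤ ⟪G a - G b, a - b⟫ := by
    intro a b
    have h1 := aux_first_order hsc (y := b) (hGφ a)
    have h2 := aux_first_order hsc (y := a) (hGφ b)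
    have e1 : ⟪G b - μ • b, a - b⟫ = -⟪G b - μ • b, b - a⟫ := by
      rw [show a - b = -(b - a) by abel, inner_neg_right]
    have e2 : ⟪(G a - μ • a) - (G b - μ • b), b - a⟫ ≤ 0 := by
      rw [inner_sub_left]; linarith
    have e3 : (G a - μ • a) - (G b - μ • b) = (G a - G b) - μ • (a - b) := by
      rw [smul_sub]; abel
    rw [e3] at e2
    have e4 : ⟪(G a - G b) - μ • (a - b), b - a⟫
        = -(⟪G a - G b, a - b⟫ - μ * ‖a - b‖ ^ 2) := by
      rw [show b - a = -(a - b) by abel, inner_neg_right, inner_sub_left,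
        real_inner_smul_left, real_inner_self_eq_norm_sq]
    rw [e4] at e2
    linarith
  set u := G x - G y with hu
  set d := x - y with hd
  rcases eq_or_lt_of_le hμL with hEq | hlt
  · -- μ = L
    subst hEq
    have h1 : ‖u‖ ≤ μ * ‖d‖ := hlip x y
    have h2 := mono x y
    nlinarith [norm_nonneg u, norm_nonneg d]
  · -- μ < L
    set M := L - μ with hM
    have hMpos : 0 < M := by simp [hM]; linarith
    have hdescf : ∀ a b : E, f b ≤ f a + ⟪G a, b - a⟫ + L / 2 * ‖b - a‖ ^ 2 :=
      aux_descent hG (le_trans hμ.le hμL) hlip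
    have hdescφ : ∀ a b : E, φ b ≤ φ a + ⟪G a - μ • a, b - a⟫ + M / 2 * ‖b - a‖ ^ 2 := by
      intro a b
      have hid : ‖b‖ ^ 2 = ‖a‖ ^ 2 + 2 * ⟪a, b - a⟫ + ‖b - a‖ ^ 2 := by
        have := norm_add_sq_real a (b - a)
        rw [show a + (b - a) = b by abel] at this
        linarith
      have e1 : ⟪G a - μ • a, b - a⟫ = ⟪G a, b - a⟫ - μ * ⟪a, b - a⟫ := by
        rw [inner_sub_left, real_inner_smul_left]
      have hd := hdescf a b
      simp only [hφ]
      rw [e1]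
      rw [hM]
      nlinarith [hd, hid]
    have coco := aux_coco hGφ hsc hMpos hdescφ x y
    have eG : (G x - μ • x) - (G y - μ • y) = u - μ • d := by
      rw [hu, hd, smul_sub]; abel
    rw [eG] at coco
    have e5 : ⟪u - μ • d, d⟫ = ⟪u, d⟫ - μ * ‖d‖ ^ 2 := by
      rw [inner_sub_left, real_inner_smul_left, real_inner_self_eq_norm_sq]
    have e6 : ‖u - μ • d‖ ^ 2 = ‖u‖ ^ 2 - 2 * μ * ⟪u, d⟫ + μ ^ 2 * ‖d‖ ^ 2 := by
      rw [norm_sub_sq_real, real_inner_smul_right, norm_smul, Real.norm_eq_abs]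
      rw [mul_pow, sq_abs]
      ring
    rw [e5, e6] at coco
    have coco' : ‖u‖ ^ 2 - 2 * μ * ⟪u, d⟫ + μ ^ 2 * ‖d‖ ^ 2
        ≤ M * (⟪u, d⟫ - μ * ‖d‖ ^ 2) := by
      rw [div_mul_eq_mul_div, one_mul, div_le_iff₀ hMpos] at coco
      linarith [mul_comm (⟪u, d⟫ - μ * ‖d‖ ^ 2) M ▸ coco]
    rw [hM] at coco'
    nlinarith [coco']

end SteepestDescentAux


/-- One-step contraction of steepest descent: if `f : ℝⁿ → ℝ` is
differentiable, μ-strongly convex with L-Lipschitz gradient, `0 < μ ≤ L`,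
`∇f(x*) = 0`, `c₁ = 2/(μ+L)`, `c₂ = 2μL/(μ+L)` and `0 < α ≤ c₁`, then for all
`x`, `‖x − α∇f(x) − x*‖² ≤ (1 − αc₂)‖x − x*‖²`. -/
theorem steepest_descent_one_step_contraction
    (n : ℕ) (f : EuclideanSpace ℝ (Fin n) → ℝ) (μ L : ℝ)
    (hμ : 0 < μ) (hμL : μ ≤ L)
    (hdiff : Differentiable ℝ f)
    (hsc : ConvexOn ℝ Set.univ (fun x => f x - μ / 2 * ‖x‖ ^ 2))
    (hlip : ∀ x y : EuclideanSpace ℝ (Fin n),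
      ‖gradient f x - gradient f y‖ ≤ L * ‖x - y‖)
    (xstar : EuclideanSpace ℝ (Fin n)) (hxstar : gradient f xstar = 0)
    (c₁ c₂ : ℝ) (hc₁ : c₁ = 2 / (μ + L)) (hc₂ : c₂ = 2 * μ * L / (μ + L))
    (α : ℝ) (hα0 : 0 < α) (hα1 : α ≤ c₁) :
    ∀ x : EuclideanSpace ℝ (Fin n),
      ‖x - α • gradient f x - xstar‖ ^ 2 ≤ (1 - α * c₂) * ‖x - xstar‖ ^ 2 := by
  intro x
  have hG : ∀ z, HasGradientAt f (gradient f z) z := fun z => (hdiff z).hasGradientAt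
  have key := aux_key hG hμ hμL hsc hlip x xstar
  rw [hxstar, sub_zero] at key
  set g : EuclideanSpace ℝ (Fin n) := gradient f x with hg
  set d : EuclideanSpace ℝ (Fin n) := x - xstar with hd
  have hsp : 0 < μ + L := by linarith
  have hαs : α * (μ + L) ≤ 2 := by
    rw [hc₁] at hα1
    calc α * (μ + L) ≤ 2 / (μ + L) * (μ + L) := by
          apply mul_le_mul_of_nonneg_right hα1 hsp.le
      _ = 2 := by field_simp
  have hrw : x - α • g - xstar = d - α • g := by rw [hd]; abel
  rw [hrw]
  have hnorm : ‖d - α • g‖ ^ 2 = ‖d‖ ^ 2 - 2 * α * ⟪g, d⟫_ℝ + α ^ 2 * ‖g‖ ^ 2 := by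
    rw [norm_sub_sq_real, real_inner_smul_right, norm_smul, Real.norm_eq_abs,
      mul_pow, sq_abs, real_inner_comm]
    ring
  rw [hnorm]
  rw [← mul_le_mul_iff_right₀ hsp]
  have hrhs : (μ + L) * ((1 - α * c₂) * ‖d‖ ^ 2)
      = (μ + L) * ‖d‖ ^ 2 - 2 * μ * L * α * ‖d‖ ^ 2 := by
    rw [hc₂]; field_simp
  rw [hrhs]
  have h1 : α * (μ * L * ‖d‖ ^ 2 + ‖g‖ ^ 2) ≤ α * ((μ + L) * ⟪g, d⟫_ℝ) :=
    mul_le_mul_of_nonneg_left key hα0.le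
  have h2 : α * ‖g‖ ^ 2 * (α * (μ + L) - 2) ≤ 0 :=
    mul_nonpos_of_nonneg_of_nonpos
      (mul_nonneg hα0.le (sq_nonneg _)) (by linarith)
  nlinarith [h1, h2]
end

section
/- Let f: ℝⁿ → ℝ be differentiable, μ-strongly convex with L-Lipschitz gradient, 0 < μ ≤ L, and let x* be the point with ∇f(x*) = 0. Set c₁ = 2/(μ + L) and c₂ = 2μL/(μ + L), and fix a step size α with 0 < α ≤ c₁ (so that 0 ≤ 1 − αc₂ < 1). Then the steepest-descent iterates x(k+1) = x(k) − α∇f(x(k)) satisfy ‖x(k) − x*‖ ≤ (1 − αc₂)^{k/2} ‖x(0) − x*‖ for all k ≥ 0; in particular the iterates converge Q-linearly to x*. -/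
open Set InnerProductSpace

section SDAux

variable {E : Type*} [NormedAddCommGroup E] [InnerProductSpace ℝ E] [CompleteSpace E]

/-- Derivative of a function along a line, in terms of its gradient. -/
lemma sd_hasDerivAt_line {g : E → ℝ} {Gg : E} {a b : E} {t : ℝ}
    (hg : HasGradientAt g Gg (a + t • (b - a))) :
    HasDerivAt (fun s : ℝ => g (a + s • (b - a))) (inner ℝ Gg (b - a) : ℝ) t := by
  have hline : HasDerivAt (fun s : ℝ => a + s • (b - a)) (b - a) t := by
    simpa using ((hasDerivAt_id t).smul_const (b - a)).const_add a
  have := (hasGradientAt_iff_hasFDerivAt.mp hg).comp_hasDerivAt t hline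
  exact this

/-- First-order condition for a convex differentiable function. -/
lemma sd_first_order {g : E → ℝ} {Gg : E → E}
    (hconv : ConvexOn ℝ Set.univ g) (hg : ∀ z, HasGradientAt g (Gg z) z) (a b : E) :
    (inner ℝ (Gg a) (b - a) : ℝ) ≤ g b - g a := by
  set φ : ℝ → ℝ := fun s : ℝ => g (a + s • (b - a)) with hφ
  have hφeq : φ = g ∘ (AffineMap.lineMap a b : ℝ →ᵃ[ℝ] E) := by
    funext t
    simp [hφ, AffineMap.lineMap_apply_module', add_comm]
  have hφc : ConvexOn ℝ Set.univ φ := by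
    rw [hφeq]
    simpa using hconv.comp_affineMap (AffineMap.lineMap a b : ℝ →ᵃ[ℝ] E)
  have hd : HasDerivAt φ (inner ℝ (Gg a) (b - a) : ℝ) 0 := by
    have := sd_hasDerivAt_line (g := g) (Gg := Gg (a + (0:ℝ) • (b - a))) (a := a) (b := b)
      (t := 0) (hg _)
    simpa using this
  have := hφc.le_slope_of_hasDerivAt (mem_univ (0:ℝ)) (mem_univ (1:ℝ)) one_pos hd
  rw [slope_def_field] at this
  simpa [hφ] using this

/-- Quadratic upper bound from a one-sided Lipschitz-type monotonicity bound. -/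
lemma sd_quad_upper {g : E → ℝ} {Gg : E → E} {K : ℝ}
    (hg : ∀ z, HasGradientAt g (Gg z) z)
    (hmono : ∀ z w : E, (inner ℝ (Gg z - Gg w) (z - w) : ℝ) ≤ K * ‖z - w‖ ^ 2) (a b : E) :
    g b ≤ g a + inner ℝ (Gg a) (b - a) + K / 2 * ‖b - a‖ ^ 2 := by
  set u := b - a with hu
  set c1 : ℝ := inner ℝ (Gg a) u with hc1
  set c2 : ℝ := ‖u‖ ^ 2 with hc2
  set ψ : ℝ → ℝ := fun t => g (a + t • u) - t * c1 - K / 2 * c2 * t ^ 2 with hψ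
  have hψd : ∀ t : ℝ, HasDerivAt ψ
      ((inner ℝ (Gg (a + t • u)) u : ℝ) - c1 - K / 2 * c2 * (2 * t)) t := by
    intro t
    have h1 : HasDerivAt (fun s : ℝ => g (a + s • u)) (inner ℝ (Gg (a + t • u)) u : ℝ) t :=
      sd_hasDerivAt_line (hg _)
    have h2 : HasDerivAt (fun s : ℝ => s * c1) c1 t := by
      simpa using (hasDerivAt_id t).mul_const c1
    have h3 : HasDerivAt (fun s : ℝ => K / 2 * c2 * s ^ 2) (K / 2 * c2 * (2 * t)) t := by
      simpa using (hasDerivAt_pow 2 t).const_mul (K / 2 * c2)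
    exact (h1.sub h2).sub h3
  have hanti : AntitoneOn ψ (Icc (0:ℝ) 1) := by
    apply antitoneOn_of_deriv_nonpos (convex_Icc 0 1)
    · exact fun t _ => ((hψd t).differentiableAt).continuousAt.continuousWithinAt
    · intro t ht
      exact ((hψd t).differentiableAt).differentiableWithinAt
    · intro t ht
      rw [interior_Icc] at ht
      rw [(hψd t).deriv]
      have key : (inner ℝ (Gg (a + t • u) - Gg a) (t • u) : ℝ) ≤ K * ‖t • u‖ ^ 2 := by
        have := hmono (a + t • u) a
        simpa using this
      have ht0 : 0 < t := ht.1
      simp only [inner_sub_left, real_inner_smul_right, norm_smul,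
        Real.norm_eq_abs, abs_of_pos ht0, mul_pow] at key
      have key2 : (inner ℝ (Gg (a + t • u)) u : ℝ) - c1 ≤ K * t * c2 := by
        rw [hc1, hc2]
        nlinarith [key, ht0]
      nlinarith [key2]
  have h01 : ψ 1 ≤ ψ 0 := hanti (by norm_num) (by norm_num) (by norm_num)
  have e0 : ψ 0 = g a := by simp [hψ]
  have e1 : ψ 1 = g b - c1 - K / 2 * c2 := by simp [hψ, hu]
  rw [e0, e1] at h01
  linarith

/-- Lower quadratic bound (co-coercivity precursor). -/
lemma sd_lower {g : E → ℝ} {Gg : E → E} {K : ℝ} (hK : 0 < K)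
    (hg : ∀ z, HasGradientAt g (Gg z) z)
    (hmono : ∀ z w : E, (inner ℝ (Gg z - Gg w) (z - w) : ℝ) ≤ K * ‖z - w‖ ^ 2)
    (hfo : ∀ a b : E, (inner ℝ (Gg a) (b - a) : ℝ) ≤ g b - g a) (a b : E) :
    g a + inner ℝ (Gg a) (b - a) + 1 / (2 * K) * ‖Gg b - Gg a‖ ^ 2 ≤ g b := by
  set d := Gg b - Gg a with hd
  set z := b - K⁻¹ • d with hz
  have h1 : (inner ℝ (Gg a) (z - a) : ℝ) ≤ g z - g a := hfo a z
  have h2 : g z ≤ g b + inner ℝ (Gg b) (z - b) + K / 2 * ‖z - b‖ ^ 2 := sd_quad_upper hg hmono b z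
  have ezb : z - b = -(K⁻¹ • d) := by rw [hz]; abel
  have eza : z - a = (b - a) - K⁻¹ • d := by rw [hz]; abel
  rw [eza] at h1
  rw [ezb] at h2
  rw [inner_sub_right, real_inner_smul_right] at h1
  rw [inner_neg_right, real_inner_smul_right, norm_neg, norm_smul] at h2
  have hgbd : (inner ℝ (Gg b) d : ℝ) - (inner ℝ (Gg a) d : ℝ) = ‖d‖ ^ 2 := by
    rw [← inner_sub_left, hd, real_inner_self_eq_norm_sq]
  have hKnorm : |K⁻¹| = K⁻¹ := abs_of_pos (by positivity)
  rw [Real.norm_eq_abs, hKnorm] at h2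
  have hKne : K ≠ 0 := ne_of_gt hK
  have expand : K / 2 * (K⁻¹ * ‖d‖) ^ 2 = 1 / (2 * K) * ‖d‖ ^ 2 := by
    field_simp
  rw [expand] at h2
  have e3 : K⁻¹ * (inner ℝ (Gg b) d : ℝ) - K⁻¹ * (inner ℝ (Gg a) d : ℝ) = K⁻¹ * ‖d‖ ^ 2 := by
    rw [← mul_sub, hgbd]
  have e4 : K⁻¹ * ‖d‖ ^ 2 = 2 * (1 / (2 * K) * ‖d‖ ^ 2) := by
    field_simp
  linarith [h1, h2, e3, e4]

end SDAux

set_option maxHeartbeats 2000000 in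
/-- Q-linear convergence of steepest descent: under μ-strong convexity, an
L-Lipschitz gradient, `0 < μ ≤ L`, `∇f(x*) = 0`, `c₁ = 2/(μ+L)`,
`c₂ = 2μL/(μ+L)`, and a step size `0 < α ≤ c₁` (so `0 ≤ 1 − αc₂ < 1`), the
iterates `x(k+1) = x(k) − α∇f(x(k))` satisfy
`‖x(k) − x*‖ ≤ (1 − αc₂)^(k/2) ‖x(0) − x*‖` for all `k`. -/
theorem steepest_descent_q_linear_convergence
    (n : ℕ) (f : EuclideanSpace ℝ (Fin n) → ℝ) (μ L : ℝ)
    (hμ : 0 < μ) (hμL : μ ≤ L)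
    (hdiff : Differentiable ℝ f)
    (hsc : ConvexOn ℝ Set.univ (fun x => f x - μ / 2 * ‖x‖ ^ 2))
    (hlip : ∀ x y : EuclideanSpace ℝ (Fin n),
      ‖gradient f x - gradient f y‖ ≤ L * ‖x - y‖)
    (xstar : EuclideanSpace ℝ (Fin n)) (hxstar : gradient f xstar = 0)
    (c₁ c₂ : ℝ) (hc₁ : c₁ = 2 / (μ + L)) (hc₂ : c₂ = 2 * μ * L / (μ + L))
    (α : ℝ) (hα0 : 0 < α) (hα1 : α ≤ c₁)
    (x : ℕ → EuclideanSpace ℝ (Fin n))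
    (hiter : ∀ k : ℕ, x (k + 1) = x k - α • gradient f (x k)) :
    (0 ≤ 1 - α * c₂ ∧ 1 - α * c₂ < 1) ∧
      ∀ k : ℕ, ‖x k - xstar‖ ≤ (1 - α * c₂) ^ ((k : ℝ) / 2) * ‖x 0 - xstar‖ := by
  have hL : 0 < L := lt_of_lt_of_le hμ hμL
  have hS : 0 < μ + L := by linarith
  -- gradient of g := f - μ/2 ‖·‖²
  have hG : ∀ z : EuclideanSpace ℝ (Fin n),
      HasGradientAt (fun x => f x - μ / 2 * ‖x‖ ^ 2) (gradient f z - μ • z) z := by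
    intro z
    have h1 : HasFDerivAt f (toDual ℝ _ (gradient f z)) z :=
      hasGradientAt_iff_hasFDerivAt.mp (hdiff z).hasGradientAt
    have h2 : HasFDerivAt (fun x : EuclideanSpace ℝ (Fin n) => μ / 2 * ‖x‖ ^ 2)
        ((μ / 2) • (2 • (innerSL ℝ z))) z :=
      ((hasStrictFDerivAt_norm_sq z).hasFDerivAt).const_mul (μ / 2)
    have h3 := h1.sub h2
    rw [hasGradientAt_iff_hasFDerivAt]
    refine h3.congr_fderiv ?_
    ext v
    simp [inner_sub_left, real_inner_smul_left]
    ring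
  have hfo : ∀ a b : EuclideanSpace ℝ (Fin n),
      (inner ℝ (gradient f a - μ • a) (b - a) : ℝ)
        ≤ (f b - μ / 2 * ‖b‖ ^ 2) - (f a - μ / 2 * ‖a‖ ^ 2) :=
    fun a b => sd_first_order (Gg := fun z => gradient f z - μ • z) hsc hG a b
  -- one-sided Lipschitz bound for the gradient of g
  have hmono : ∀ z w : EuclideanSpace ℝ (Fin n),
      (inner ℝ ((gradient f z - μ • z) - (gradient f w - μ • w)) (z - w) : ℝ)
        ≤ (L - μ) * ‖z - w‖ ^ 2 := by
    intro z w
    have e : (gradient f z - μ • z) - (gradient f w - μ • w)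
        = (gradient f z - gradient f w) - μ • (z - w) := by module
    rw [e, inner_sub_left, real_inner_smul_left, real_inner_self_eq_norm_sq]
    have hcs : (inner ℝ (gradient f z - gradient f w) (z - w) : ℝ)
        ≤ ‖gradient f z - gradient f w‖ * ‖z - w‖ := real_inner_le_norm _ _
    have hl := hlip z w
    nlinarith [hcs, mul_le_mul_of_nonneg_right hl (norm_nonneg (z - w))]
  -- strong monotonicity of the gradient of f
  have hsm : ∀ z w : EuclideanSpace ℝ (Fin n),
      μ * ‖z - w‖ ^ 2 ≤ (inner ℝ (gradient f z - gradient f w) (z - w) : ℝ) := by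
    intro z w
    have h := hfo z w
    have h' := hfo w z
    have e1 : w - z = -(z - w) := by abel
    rw [e1, inner_neg_right] at h
    have hG0 : (0:ℝ) ≤ inner ℝ ((gradient f z - μ • z) - (gradient f w - μ • w)) (z - w) := by
      rw [inner_sub_left]; linarith
    have e : (gradient f z - μ • z) - (gradient f w - μ • w)
        = (gradient f z - gradient f w) - μ • (z - w) := by module
    rw [e, inner_sub_left, real_inner_smul_left, real_inner_self_eq_norm_sq] at hG0
    linarith
  -- coercivity at xstar
  have hco : ∀ z : EuclideanSpace ℝ (Fin n),
      ‖gradient f z‖ ^ 2 + μ * L * ‖z - xstar‖ ^ 2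
      ≤ (μ + L) * (inner ℝ (gradient f z) (z - xstar) : ℝ) := by
    intro z
    have eG : (gradient f z - μ • z) - (gradient f xstar - μ • xstar)
        = gradient f z - μ • (z - xstar) := by
      rw [hxstar]
      module
    have hnorm : ‖gradient f z - μ • (z - xstar)‖ ^ 2
        = ‖gradient f z‖ ^ 2 - 2 * μ * (inner ℝ (gradient f z) (z - xstar) : ℝ)
          + μ ^ 2 * ‖z - xstar‖ ^ 2 := by
      rw [norm_sub_sq_real, real_inner_smul_right, norm_smul, Real.norm_eq_abs,
        abs_of_pos hμ, mul_pow]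
      ring
    have hinner : (inner ℝ (gradient f z - μ • (z - xstar)) (z - xstar) : ℝ)
        = (inner ℝ (gradient f z) (z - xstar) : ℝ) - μ * ‖z - xstar‖ ^ 2 := by
      rw [inner_sub_left, real_inner_smul_left, real_inner_self_eq_norm_sq]
    rcases lt_or_eq_of_le hμL with hlt | heq
    · -- μ < L : use co-coercivity
      have hK : (0:ℝ) < L - μ := by linarith
      have hl1 := sd_lower (Gg := fun z => gradient f z - μ • z) hK hG hmono hfo xstar z
      have hl2 := sd_lower (Gg := fun z => gradient f z - μ • z) hK hG hmono hfo z xstar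
      have e1 : xstar - z = -(z - xstar) := by abel
      rw [e1, inner_neg_right] at hl2
      have e2 : ‖(gradient f xstar - μ • xstar) - (gradient f z - μ • z)‖
          = ‖(gradient f z - μ • z) - (gradient f xstar - μ • xstar)‖ := norm_sub_rev _ _
      rw [e2] at hl2
      have hcoco : 2 * (1 / (2 * (L - μ))
            * ‖(gradient f z - μ • z) - (gradient f xstar - μ • xstar)‖ ^ 2)
          ≤ (inner ℝ (gradient f z - μ • z) (z - xstar) : ℝ)
            - (inner ℝ (gradient f xstar - μ • xstar) (z - xstar) : ℝ) := by
        linarith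
      have hcoco2 : ‖(gradient f z - μ • z) - (gradient f xstar - μ • xstar)‖ ^ 2
          ≤ (L - μ) * ((inner ℝ (gradient f z - μ • z) (z - xstar) : ℝ)
            - (inner ℝ (gradient f xstar - μ • xstar) (z - xstar) : ℝ)) := by
        have h4 := mul_le_mul_of_nonneg_left hcoco (le_of_lt hK)
        have e5 : (L - μ) * (2 * (1 / (2 * (L - μ))
              * ‖(gradient f z - μ • z) - (gradient f xstar - μ • xstar)‖ ^ 2))
            = ‖(gradient f z - μ • z) - (gradient f xstar - μ • xstar)‖ ^ 2 := by
          field_simp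
        rw [e5] at h4
        exact h4
      have e6 : (inner ℝ (gradient f z - μ • z) (z - xstar) : ℝ)
            - (inner ℝ (gradient f xstar - μ • xstar) (z - xstar) : ℝ)
          = (inner ℝ (gradient f z - μ • (z - xstar)) (z - xstar) : ℝ) := by
        rw [← inner_sub_left, eG]
      rw [e6, hinner, eG, hnorm] at hcoco2
      nlinarith [hcoco2]
    · -- μ = L
      subst heq
      have h5 := hsm z xstar
      rw [hxstar, sub_zero] at h5
      have h6 := hlip z xstar
      rw [hxstar, sub_zero] at h6
      have h7 : ‖gradient f z‖ * ‖gradient f z‖ ≤ (μ * ‖z - xstar‖) * (μ * ‖z - xstar‖) :=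
        mul_self_le_mul_self (norm_nonneg _) h6
      nlinarith [h5, h7, mul_le_mul_of_nonneg_left h5 (le_of_lt hμ)]
  -- step size facts
  have hα1' : α * (μ + L) ≤ 2 := by
    rw [hc₁] at hα1
    calc α * (μ + L) ≤ (2 / (μ + L)) * (μ + L) :=
          mul_le_mul_of_nonneg_right hα1 (le_of_lt hS)
      _ = 2 := by field_simp
  have hc₂pos : 0 < c₂ := by
    rw [hc₂]
    positivity
  have hr0 : 0 ≤ 1 - α * c₂ := by
    rw [hc₂, sub_nonneg]
    rw [show α * (2 * μ * L / (μ + L)) = α * (2 * μ * L) / (μ + L) by ring,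
      div_le_one hS]
    nlinarith [hα1', sq_nonneg (μ - L), hμ, hL, hS]
  have hr1 : 1 - α * c₂ < 1 := by
    nlinarith [mul_pos hα0 hc₂pos]
  -- contraction in squared norm
  have hstep : ∀ k : ℕ, ‖x (k + 1) - xstar‖ ^ 2 ≤ (1 - α * c₂) * ‖x k - xstar‖ ^ 2 := by
    intro k
    rw [hiter k]
    have e : x k - α • gradient f (x k) - xstar
        = (x k - xstar) - α • gradient f (x k) := by abel
    rw [e]
    have hnorm : ‖(x k - xstar) - α • gradient f (x k)‖ ^ 2
        = ‖x k - xstar‖ ^ 2 - 2 * α * (inner ℝ (gradient f (x k)) (x k - xstar) : ℝ)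
          + α ^ 2 * ‖gradient f (x k)‖ ^ 2 := by
      rw [norm_sub_sq_real, real_inner_smul_right, norm_smul, Real.norm_eq_abs,
        abs_of_pos hα0, mul_pow, real_inner_comm]
      ring
    rw [hnorm]
    have hcoz := hco (x k)
    rw [← mul_le_mul_iff_right₀ hS]
    have ec : (μ + L) * ((1 - α * c₂) * ‖x k - xstar‖ ^ 2)
        = (μ + L) * ‖x k - xstar‖ ^ 2 - α * (2 * μ * L) * ‖x k - xstar‖ ^ 2 := by
      rw [hc₂]
      field_simp
    rw [ec]
    have hint1 := mul_le_mul_of_nonneg_left hcoz (by positivity : (0:ℝ) ≤ 2 * α)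
    have hint2 := mul_le_mul_of_nonneg_right hα1'
      (mul_nonneg (le_of_lt hα0) (sq_nonneg ‖gradient f (x k)‖))
    nlinarith [hint1, hint2]
  have hsq : ∀ k : ℕ, ‖x k - xstar‖ ^ 2 ≤ (1 - α * c₂) ^ k * ‖x 0 - xstar‖ ^ 2 := by
    intro k
    induction k with
    | zero => simp
    | succ k ih =>
      calc ‖x (k + 1) - xstar‖ ^ 2 ≤ (1 - α * c₂) * ‖x k - xstar‖ ^ 2 := hstep k
        _ ≤ (1 - α * c₂) * ((1 - α * c₂) ^ k * ‖x 0 - xstar‖ ^ 2) :=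
            mul_le_mul_of_nonneg_left ih hr0
        _ = (1 - α * c₂) ^ (k + 1) * ‖x 0 - xstar‖ ^ 2 := by ring
  refine ⟨⟨hr0, hr1⟩, ?_⟩
  intro k
  have h := hsq k
  have hsqrt : Real.sqrt ((1 - α * c₂) ^ k) = (1 - α * c₂) ^ ((k : ℝ) / 2) := by
    rw [Real.sqrt_eq_rpow, ← Real.rpow_natCast (1 - α * c₂) k, ← Real.rpow_mul hr0,
      mul_one_div]
  calc ‖x k - xstar‖ = Real.sqrt (‖x k - xstar‖ ^ 2) :=
        (Real.sqrt_sq (norm_nonneg _)).symm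
    _ ≤ Real.sqrt ((1 - α * c₂) ^ k * ‖x 0 - xstar‖ ^ 2) := Real.sqrt_le_sqrt h
    _ = Real.sqrt ((1 - α * c₂) ^ k) * Real.sqrt (‖x 0 - xstar‖ ^ 2) :=
        Real.sqrt_mul (pow_nonneg hr0 k) _
    _ = (1 - α * c₂) ^ ((k : ℝ) / 2) * ‖x 0 - xstar‖ := by
        rw [hsqrt, Real.sqrt_sq (norm_nonneg _)]
end

section
/- Let Q be a symmetric positive definite n×n real matrix, b ∈ ℝⁿ, and f(x) = (1/2)xᵀQx − xᵀb. Let d(0), …, d(n−1) be nonzero mutually Q-conjugate vectors in ℝⁿ, and define iterates by x(k+1) = x(k) + α(k)d(k) with exact line-search step sizes α(k) = −g(k)ᵀd(k)/(d(k)ᵀQd(k)), where g(k) = ∇f(x(k)) = Qx(k) − b. Then for any starting point x(0) ∈ ℝⁿ, the iterate after n steps is the unique minimizer of f: x(n) = Q⁻¹b. -/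
open Matrix

/-- The conjugate direction method minimizes the quadratic
`f(x) = ½ xᵀQx − xᵀb` in `n` steps: with nonzero mutually Q-conjugate
directions `d(0), …, d(n−1)`, iterates `x(k+1) = x(k) + α(k)d(k)` and exact
line-search step sizes `α(k) = −g(k)ᵀd(k)/(d(k)ᵀQd(k))` where
`g(k) = Qx(k) − b`, starting from any `x(0)`, one has `x(n) = Q⁻¹b`. -/
theorem conjugate_direction_method_converges_in_n_steps
    (n : ℕ) (Q : Matrix (Fin n) (Fin n) ℝ) (hQsymm : Q.IsSymm)
    (hQ : Q.PosDef) (b : Fin n → ℝ)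
    (d : Fin n → (Fin n → ℝ)) (hne : ∀ i, d i ≠ 0)
    (hconj : ∀ i j, i ≠ j → d i ⬝ᵥ Q.mulVec (d j) = 0)
    (x : ℕ → (Fin n → ℝ))
    (hiter : ∀ k : Fin n,
      x (k + 1) = x k +
        (-(((Q.mulVec (x k) - b) ⬝ᵥ d k) / (d k ⬝ᵥ Q.mulVec (d k)))) • d k) :
    x n = Q⁻¹.mulVec b := by
  rcases Nat.eq_zero_or_pos n with h0 | hn
  · subst h0; funext i; exact i.elim0
  haveI : Nonempty (Fin n) := Fin.pos_iff_nonempty.mp hn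
  have hsum : ∀ (c : Fin n → ℝ) (w : Fin n → ℝ),
      (∑ i, c i • d i) ⬝ᵥ w = ∑ i, c i * (d i ⬝ᵥ w) := by
    intro c w
    simp only [dotProduct, Finset.sum_apply, Pi.smul_apply, smul_eq_mul,
      Finset.sum_mul, Finset.mul_sum, mul_assoc]
    exact Finset.sum_comm
  set g : ℕ → (Fin n → ℝ) := fun m => Q.mulVec (x m) - b with hgdef
  have hpos : ∀ k : Fin n, 0 < d k ⬝ᵥ Q.mulVec (d k) := by
    intro k
    have := hQ.dotProduct_mulVec_pos (hne k)
    simpa using this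
  have hstep : ∀ (j : Fin n) (v : Fin n → ℝ),
      g ((j : ℕ) + 1) ⬝ᵥ v = g j ⬝ᵥ v
        + (-((g j ⬝ᵥ d j) / (d j ⬝ᵥ Q.mulVec (d j)))) * (Q.mulVec (d j) ⬝ᵥ v) := by
    intro j v
    have hx := hiter j
    simp only [hgdef] at *
    rw [hx, mulVec_add, mulVec_smul]
    simp [sub_dotProduct, add_dotProduct, smul_dotProduct]
    ring
  have key : ∀ (k : Fin n) (m : ℕ), (k : ℕ) + 1 ≤ m → m ≤ n → g m ⬝ᵥ d k = 0 := by
    intro k m hm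
    induction m, hm using Nat.le_induction with
    | base =>
      intro _
      rw [hstep k (d k), dotProduct_comm (Q.mulVec (d k))]
      have ht := (hpos k).ne'
      field_simp
      ring
    | succ m hm ih =>
      intro hmn
      have hmn' : m < n := hmn
      have hj : g (((⟨m, hmn'⟩ : Fin n) : ℕ) + 1) ⬝ᵥ d k =
          g (⟨m, hmn'⟩ : Fin n) ⬝ᵥ d k
          + (-((g (⟨m, hmn'⟩ : Fin n) ⬝ᵥ d (⟨m, hmn'⟩ : Fin n))
              / (d (⟨m, hmn'⟩ : Fin n) ⬝ᵥ Q.mulVec (d (⟨m, hmn'⟩ : Fin n)))))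
            * (Q.mulVec (d (⟨m, hmn'⟩ : Fin n)) ⬝ᵥ d k) :=
        hstep (⟨m, hmn'⟩ : Fin n) (d k)
    -- coercion ↑⟨m,hmn'⟩ = m
      have hne' : k ≠ (⟨m, hmn'⟩ : Fin n) := by
        intro h
        have : (k : ℕ) = m := by rw [h]
        omega
      have hc : Q.mulVec (d (⟨m, hmn'⟩ : Fin n)) ⬝ᵥ d k = 0 := by
        rw [dotProduct_comm]
        exact hconj k _ hne'
      have hih : g m ⬝ᵥ d k = 0 := ih (le_of_lt hmn')
      simp only [Fin.val_mk] at hj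
      rw [hj, hih, hc]
      ring
  have horth : ∀ k : Fin n, g n ⬝ᵥ d k = 0 := fun k =>
    key k n (Nat.succ_le_of_lt k.isLt) le_rfl
  -- linear independence of d
  have hli : LinearIndependent ℝ d := by
    rw [Fintype.linearIndependent_iff]
    intro c hc j
    have h1 : (∑ i, c i • d i) ⬝ᵥ Q.mulVec (d j) = 0 := by rw [hc]; simp
    rw [hsum] at h1
    rw [Finset.sum_eq_single j] at h1
    · have := (hpos j).ne'
      rcases mul_eq_zero.mp h1 with h | h
      · exact h
      · exact absurd h this
    · intro i _ hij
      rw [hconj i j hij, mul_zero]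
    · intro h
      exact absurd (Finset.mem_univ j) h
  have hcard : Fintype.card (Fin n) = Module.finrank ℝ (Fin n → ℝ) := by
    simp
  let B : Module.Basis (Fin n) ℝ (Fin n → ℝ) := basisOfLinearIndependentOfCardEqFinrank hli hcard
  have hB : ∀ i, B i = d i := fun i => by
    simp [B, coe_basisOfLinearIndependentOfCardEqFinrank]
  have hgz : g n = 0 := by
    have hrepr : ∑ i, B.repr (g n) i • d i = g n := by
      have := B.sum_repr (g n)
      simp only [hB] at this
      exact this
    have hself : g n ⬝ᵥ g n = 0 := by
      calc g n ⬝ᵥ g n = (∑ i, B.repr (g n) i • d i) ⬝ᵥ g n := by rw [hrepr]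
        _ = ∑ i, B.repr (g n) i * (d i ⬝ᵥ g n) := hsum _ _
        _ = 0 := Finset.sum_eq_zero fun i _ => by
            rw [dotProduct_comm, horth i, mul_zero]
    exact dotProduct_self_eq_zero.mp hself
  have hQx : Q.mulVec (x n) = b := by
    have h := hgz
    simp only [hgdef] at h
    exact sub_eq_zero.mp h
  have hdet : IsUnit Q.det := hQ.det_pos.ne'.isUnit
  calc x n = (Q⁻¹ * Q).mulVec (x n) := by rw [nonsing_inv_mul Q hdet, one_mulVec]
    _ = Q⁻¹.mulVec (Q.mulVec (x n)) := by rw [← mulVec_mulVec]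
    _ = Q⁻¹.mulVec b := by rw [hQx]
end
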